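/- For every ρ > 0, every k > 0 and every ball D = B(y,ρ) ⊆ ℝ²: the annulus 4D \ 3D contains a ball B̃ of radius ρ/4 on which inf_{x ∈ B̃} e^{2k x₁} ≥ e^{kρ/2} · sup_{x ∈ 3D \ 2D} e^{2k x₁}; consequently ∫_{3D \ 2D} e^{2k x₁} dx ≤ 80 e^{−kρ/2} ∫_{4D \ 3D} e^{2k x₁} dx. -/

import Mathlib

open MeasureTheory Metric Real

noncomputable section

abbrev E2 : Type := EuclideanSpace ℝ (Fin 2)

/-- The Euclidean Laplacian of a real-valued function on `ℝ²`. -/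
noncomputable def lap (f : E2 → ℝ) (x : E2) : ℝ :=
  ∑ i : Fin 2, fderiv ℝ (fun y => fderiv ℝ f y (EuclideanSpace.single i 1)) x
    (EuclideanSpace.single i 1)

/-- `u` is a weak solution of `(-h²Δ + V - E)u = 0` on `Ω`. -/
def IsWeakSol (Ω : Set E2) (h : ℝ) (V : E2 → ℝ) (En : ℝ) (u : E2 → ℝ) : Prop :=
  ∀ φ : E2 → ℝ, ContDiff ℝ (⊤ : ℕ∞) φ → HasCompactSupport φ → tsupport φ ⊆ Ω →
    ∫ x in Ω, u x * (-(h ^ 2) * lap φ x + (V x - En) * φ x) = 0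

/-- Weight comparison for the linear Carleman weight `e^{2k x₁}` around a small hole
`D = B(y,ρ)`: explicit constants `e^{kρ/2}` and `80`. -/
lemma vol2 (x : E2) (r : ℝ) (hr : 0 ≤ r) : volume (ball x r) = ENNReal.ofReal (π * r ^ 2) := by
  rw [EuclideanSpace.volume_ball, Fintype.card_fin]
  have h1 : ((2:ℕ) : ℝ) / 2 + 1 = 2 := by norm_num
  rw [h1, Real.Gamma_two, Real.sq_sqrt pi_nonneg, ← ENNReal.ofReal_pow hr,
    ← ENNReal.ofReal_mul (by positivity)]
  ring_nf

lemma vol2c (x : E2) (r : ℝ) (hr : 0 ≤ r) :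
    volume (closedBall x r) = ENNReal.ofReal (π * r ^ 2) := by
  rw [EuclideanSpace.volume_closedBall, Fintype.card_fin]
  have h1 : ((2:ℕ) : ℝ) / 2 + 1 = 2 := by norm_num
  rw [h1, Real.Gamma_two, Real.sq_sqrt pi_nonneg, ← ENNReal.ofReal_pow hr,
    ← ENNReal.ofReal_mul (by positivity)]
  ring_nf

lemma coord_le (x y : E2) : |x 0 - y 0| ≤ dist x y := by
  rw [EuclideanSpace.dist_eq, ← Real.sqrt_sq_eq_abs]
  apply Real.sqrt_le_sqrt
  have : (x 0 - y 0) ^ 2 = dist (x 0) (y 0) ^ 2 := by rw [Real.dist_eq, sq_abs]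
  rw [this]
  exact Finset.single_le_sum (f := fun i => dist (x i) (y i) ^ 2)
    (fun i _ => by positivity) (Finset.mem_univ 0)

theorem stmt9 (ρ k : ℝ) (hρ : 0 < ρ) (hk : 0 < k) (y : E2) :
    (∃ z : E2, closedBall z (ρ / 4) ⊆ ball y (4 * ρ) \ ball y (3 * ρ) ∧
      ∀ x ∈ closedBall z (ρ / 4), ∀ x' ∈ ball y (3 * ρ) \ ball y (2 * ρ),
        Real.exp (k * ρ / 2) * Real.exp (2 * k * x' 0) ≤ Real.exp (2 * k * x 0)) ∧
    ∫ x in ball y (3 * ρ) \ ball y (2 * ρ), Real.exp (2 * k * x 0) ≤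
      80 * Real.exp (-(k * ρ / 2)) *
        ∫ x in ball y (4 * ρ) \ ball y (3 * ρ), Real.exp (2 * k * x 0) := by
  set z : E2 := y + (7 * ρ / 2) • EuclideanSpace.single 0 1 with hzdef
  have hz0 : z 0 = y 0 + 7 * ρ / 2 := by
    simp [hzdef, EuclideanSpace.single_apply]
  have hdist : dist z y = 7 * ρ / 2 := by
    rw [hzdef, dist_eq_norm, add_sub_cancel_left, norm_smul, EuclideanSpace.norm_single]
    rw [Real.norm_eq_abs, norm_one, abs_of_pos (by positivity : (0:ℝ) < 7 * ρ / 2)]; ring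
  have hsub : closedBall z (ρ / 4) ⊆ ball y (4 * ρ) \ ball y (3 * ρ) := by
    intro x hx
    rw [mem_closedBall] at hx
    constructor
    · rw [mem_ball]
      have := dist_triangle x z y
      rw [hdist] at this; linarith
    · simp only [Set.mem_setOf_eq, mem_ball, not_lt]
      have := dist_triangle z x y
      rw [dist_comm x z] at hx
      rw [hdist] at this; linarith
  have hB : ∀ x ∈ closedBall z (ρ / 4), y 0 + 13 * ρ / 4 ≤ x 0 := by
    intro x hx
    rw [mem_closedBall] at hx
    have h1 := coord_le x z
    have h2 := abs_le.1 h1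
    have := h2.1
    rw [hz0] at this
    have h3 := h1.trans hx
    linarith [abs_le.1 (h1.trans hx) |>.1]
  have hA : ∀ x' ∈ ball y (3 * ρ) \ ball y (2 * ρ), x' 0 ≤ y 0 + 3 * ρ := by
    intro x' hx'
    have := (abs_le.1 (coord_le x' y)).2
    have hd : dist x' y < 3 * ρ := mem_ball.1 hx'.1
    linarith
  have hkey : ∀ x ∈ closedBall z (ρ / 4), ∀ x' ∈ ball y (3 * ρ) \ ball y (2 * ρ),
      Real.exp (k * ρ / 2) * Real.exp (2 * k * x' 0) ≤ Real.exp (2 * k * x 0) := by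
    intro x hx x' hx'
    rw [← Real.exp_add, Real.exp_le_exp]
    have h1 := hB x hx
    have h2 := hA x' hx'
    nlinarith
  refine ⟨⟨z, hsub, hkey⟩, ?_⟩
  -- integral part
  set f : E2 → ℝ := fun x => Real.exp (2 * k * x 0) with hf
  set M := Real.exp (2 * k * (y 0 + 3 * ρ)) with hM
  have hfc : Continuous f := by
    apply Real.continuous_exp.comp
    exact (continuous_const.mul ((EuclideanSpace.proj (0 : Fin 2) : E2 →L[ℝ] ℝ).continuous))
  have hmeasA : MeasurableSet (ball y (3 * ρ) \ ball y (2 * ρ)) :=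
    measurableSet_ball.diff measurableSet_ball
  have hmeasB : MeasurableSet (closedBall z (ρ / 4)) := measurableSet_closedBall
  have hintA : IntegrableOn f (ball y (3 * ρ) \ ball y (2 * ρ)) :=
    (hfc.continuousOn.integrableOn_compact (isCompact_closedBall y (3 * ρ))).mono_set
      (Set.diff_subset.trans ball_subset_closedBall)
  have hint4 : IntegrableOn f (ball y (4 * ρ) \ ball y (3 * ρ)) :=
    (hfc.continuousOn.integrableOn_compact (isCompact_closedBall y (4 * ρ))).mono_set
      (Set.diff_subset.trans ball_subset_closedBall)
  have hintB : IntegrableOn f (closedBall z (ρ / 4)) :=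
    hfc.continuousOn.integrableOn_compact (isCompact_closedBall z (ρ / 4))
  -- volumes
  have hvolA : (volume (ball y (3 * ρ) \ ball y (2 * ρ))).toReal = 5 * π * ρ ^ 2 := by
    rw [measure_diff (ball_subset_ball (by linarith)) measurableSet_ball.nullMeasurableSet
      (by rw [vol2 _ _ (by positivity)]; exact ENNReal.ofReal_ne_top),
      vol2 _ _ (by positivity), vol2 _ _ (by positivity),
      ← ENNReal.ofReal_sub _ (by positivity), ENNReal.toReal_ofReal (by nlinarith [pi_pos])]
    ring
  have hvolB : (volume (closedBall z (ρ / 4))).toReal = π * ρ ^ 2 / 16 := by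
    rw [vol2c _ _ (by positivity), ENNReal.toReal_ofReal (by positivity)]
    ring
  -- upper bound for integral over A
  have h1 : ∫ x in ball y (3 * ρ) \ ball y (2 * ρ), f x ≤ 5 * π * ρ ^ 2 * M := by
    calc ∫ x in ball y (3 * ρ) \ ball y (2 * ρ), f x
        ≤ ∫ _ in ball y (3 * ρ) \ ball y (2 * ρ), M := by
          apply setIntegral_mono_on hintA ((integrableOn_const_iff enorm_ne_top).2 (Or.inr ?_)) hmeasA
          · intro x hx
            rw [hf, hM, Real.exp_le_exp]
            have := hA x hx
            nlinarith
          · exact lt_of_le_of_lt (measure_mono (Set.diff_subset.trans ball_subset_closedBall))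
              measure_closedBall_lt_top
      _ = 5 * π * ρ ^ 2 * M := by
          rw [setIntegral_const, smul_eq_mul, measureReal_def, hvolA]
  -- lower bound for integral over B̃
  have h2 : π * ρ ^ 2 / 16 * (Real.exp (k * ρ / 2) * M) ≤ ∫ x in closedBall z (ρ / 4), f x := by
    calc π * ρ ^ 2 / 16 * (Real.exp (k * ρ / 2) * M)
        = ∫ _ in closedBall z (ρ / 4), Real.exp (k * ρ / 2) * M := by
          rw [setIntegral_const, smul_eq_mul, measureReal_def, hvolB]
      _ ≤ ∫ x in closedBall z (ρ / 4), f x := by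
          apply setIntegral_mono_on ((integrableOn_const_iff enorm_ne_top).2 (Or.inr measure_closedBall_lt_top))
            hintB hmeasB
          intro x hx
          rw [hf, hM, ← Real.exp_add, Real.exp_le_exp]
          have := hB x hx
          nlinarith
  have h3 : ∫ x in closedBall z (ρ / 4), f x ≤
      ∫ x in ball y (4 * ρ) \ ball y (3 * ρ), f x := by
    apply setIntegral_mono_set hint4
    · filter_upwards with x
      exact Real.exp_nonneg _
    · exact HasSubset.Subset.eventuallyLE hsub
  have hexp : Real.exp (-(k * ρ / 2)) * Real.exp (k * ρ / 2) = 1 := by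
    rw [← Real.exp_add]; simp
  calc ∫ x in ball y (3 * ρ) \ ball y (2 * ρ), f x
      ≤ 5 * π * ρ ^ 2 * M := h1
    _ = 80 * Real.exp (-(k * ρ / 2)) * (π * ρ ^ 2 / 16 * (Real.exp (k * ρ / 2) * M)) := by
        rw [show (80:ℝ) * Real.exp (-(k * ρ / 2)) * (π * ρ ^ 2 / 16 * (Real.exp (k * ρ / 2) * M))
          = 5 * π * ρ ^ 2 * M * (Real.exp (-(k * ρ / 2)) * Real.exp (k * ρ / 2)) from by ring,
          hexp, mul_one]
    _ ≤ 80 * Real.exp (-(k * ρ / 2)) * ∫ x in ball y (4 * ρ) \ ball y (3 * ρ), f x := by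
        exact mul_le_mul_of_nonneg_left (h2.trans h3) (by positivity)
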